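/- T_P is not in general monotonic with respect to ⊑_∞: there exists a finite propositional normal program P and interpretations I, J with I ⊑_∞ J but T_P(I) ⋢_∞ T_P(J). (Witness: P = {p ← ∼q; s ← p; t ← ∼s; t ← u; u ← t; q ← false} with I = {p↦T_1, q↦F_0, s↦F_0, t↦T_1, u↦F_0} and J = {p↦T_1, q↦F_0, s↦F_1, t↦F_1, u↦F_1}.) -/

import Mathlib

open Ordinal Set

noncomputable section
attribute [local instance] Classical.propDecidable

namespace IVS

/-- Countable ordinals: ordinals below `ω₁`. -/
abbrev Ord1 := {o : Ordinal.{0} // o < ω₁}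

theorem zero_lt_omega1 : (0 : Ordinal) < ω₁ := omega_pos 1

theorem succ_lt_omega1 {o : Ordinal} (h : o < ω₁) : o + 1 < ω₁ := by
  rw [← Order.succ_eq_add_one]
  exact (Cardinal.isSuccLimit_omega 1).succ_lt h

/-- zero as a countable ordinal -/
def O0 : Ord1 := ⟨0, zero_lt_omega1⟩

/-- successor on countable ordinals -/
def Ord1.succ (a : Ord1) : Ord1 := ⟨a.1 + 1, succ_lt_omega1 a.2⟩

/-- The truth domain `V`: `F_α < ⋯ < 0 < ⋯ < T_α` realized as a lexicographic sum. -/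
abbrev TV := Ord1 ⊕ₗ (Unit ⊕ₗ Ord1ᵒᵈ)

/-- the false value `F_α` -/
def TV.F (a : Ord1) : TV := toLex (Sum.inl a)
/-- the middle value `0` -/
def TV.Z : TV := toLex (Sum.inr (toLex (Sum.inl ())))
/-- the true value `T_α` -/
def TV.T (a : Ord1) : TV := toLex (Sum.inr (toLex (Sum.inr (OrderDual.toDual a))))

/-- the order of a truth value (`⊤` codes `+∞`, the order of `0`) -/
def ordOf (v : TV) : WithTop Ordinal :=
  match ofLex v with
  | .inl a => (a.1 : Ordinal)
  | .inr b =>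
    match ofLex b with
    | .inl _ => ⊤
    | .inr a => ((OrderDual.ofDual a).1 : Ordinal)

/-- negation-as-failure: `¬F_α = T_{α+1}`, `¬T_α = F_{α+1}`, `¬0 = 0`. -/
def negv (v : TV) : TV :=
  match ofLex v with
  | .inl a => TV.T a.succ
  | .inr b =>
    match ofLex b with
    | .inl _ => TV.Z
    | .inr a => TV.F (OrderDual.ofDual a).succ

/-- Literals of a propositional normal program (atoms are natural numbers). -/
inductive Lit where
  | pos (n : ℕ)
  | neg (n : ℕ)
  | tt
  | ff

/-- A normal program clause: a head atom and a body which is a conjunction of literals. -/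
structure Clause where
  head : ℕ
  body : List Lit

/-- A (possibly infinite) propositional normal logic program. -/
abbrev Program := Set Clause

/-- Infinite-valued interpretations. -/
abbrev Interp := ℕ → TV

/-- the interpretation assigning `F₀` to every atom (denoted `∅` in the paper) -/
def botI : Interp := fun _ => TV.F O0

def evalLit (I : Interp) : Lit → TV
  | .pos n => I n
  | .neg n => negv (I n)
  | .tt => TV.T O0
  | .ff => TV.F O0

/-- value of a body (conjunction evaluated by `min`; empty conjunction is `T₀`) -/
def evalBody (I : Interp) (b : List Lit) : TV :=
  (b.map (evalLit I)).foldr min (TV.T O0)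

/-- least upper bound in `V` (well-defined by the lub-existence theorem) -/
def lub (S : Set TV) : TV := if h : ∃ v, IsLUB S v then h.choose else TV.Z

/-- the immediate consequence operator -/
def TP (P : Program) (I : Interp) : Interp :=
  fun p => lub {v | ∃ c ∈ P, c.head = p ∧ evalBody I c.body = v}

/-- `I` is an (infinite-valued) model of `P` -/
def isModel (P : Program) (I : Interp) : Prop :=
  ∀ c ∈ P, evalBody I c.body ≤ I c.head

/-- the level set `I ∥ v` -/
def level (I : Interp) (v : TV) : Set ℕ := {p | I p = v}

/-- `I =_α J` -/
def eqA (α : Ord1) (I J : Interp) : Prop :=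
  ∀ β ≤ α, level I (TV.T β) = level J (TV.T β) ∧ level I (TV.F β) = level J (TV.F β)

/-- `I ⊏_α J` -/
def sqltA (α : Ord1) (I J : Interp) : Prop :=
  (∀ β < α, eqA β I J) ∧
    ((level I (TV.T α) ⊂ level J (TV.T α) ∧ level J (TV.F α) ⊆ level I (TV.F α)) ∨
     (level I (TV.T α) ⊆ level J (TV.T α) ∧ level J (TV.F α) ⊂ level I (TV.F α)))

/-- `I ⊑_α J` -/
def sqleA (α : Ord1) (I J : Interp) : Prop := eqA α I J ∨ sqltA α I J

/-- `I ⊏_∞ J` -/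
def sqltInf (I J : Interp) : Prop := ∃ α : Ord1, sqltA α I J

/-- `I ⊑_∞ J` -/
def sqleInf (I J : Interp) : Prop := I = J ∨ sqltInf I J

/-- the sequence `T_P^n(I)` is an `α`-chain -/
def isChainA (P : Program) (α : Ord1) (I : Interp) : Prop :=
  ∀ n : ℕ, sqleA α ((TP P)^[n] I) ((TP P)^[n + 1] I)

/-- the interpretation `T_{P,α}^ω(I)` -/
def TPomega (P : Program) (α : Ord1) (I : Interp) : Interp := fun p =>
  if ordOf (I p) < (α.1 : WithTop Ordinal) then I p
  else if ∃ n : ℕ, (TP P)^[n] I p = TV.T α then TV.T α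
  else if ∀ n : ℕ, (TP P)^[n] I p = TV.F α then TV.F α
  else TV.F α.succ

/-- `⊔_{β<α} M_β` for a family defined below `α` -/
def sqcupI (α : Ord1) (f : ∀ β : Ordinal, β < α.1 → Interp) : Interp := fun p =>
  if h : ∃ β : Ordinal, ∃ hb : β < α.1, ordOf (f β hb p) = (β : WithTop Ordinal)
  then f h.choose h.choose_spec.choose p
  else TV.F α

/-- the approximations `M_α` to the minimum model (junk values for `α ≥ ω₁`) -/
def MA (P : Program) (o : Ordinal) : Interp :=
  Ordinal.limitRecOn o
    (TPomega P O0 botI)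
    (fun o' ih => if h : o' + 1 < ω₁ then TPomega P ⟨o' + 1, h⟩ ih else ih)
    (fun o' _ ih =>
      if h : o' < ω₁ then TPomega P ⟨o', h⟩ (sqcupI ⟨o', h⟩ ih) else botI)

/-- `M_α` for a countable ordinal `α` -/
def Mα (P : Program) (α : Ord1) : Interp := MA P α.1

/-- the defining property of the depth `δ` of a program -/
def isDepth (P : Program) (δ : Ord1) : Prop :=
  (level (Mα P δ) (TV.T δ) = ∅ ∧ level (Mα P δ) (TV.F δ) = ∅) ∧
    ∀ β : Ord1, β < δ →
      (level (Mα P β) (TV.T β) ≠ ∅ ∨ level (Mα P β) (TV.F β) ≠ ∅)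

/-- the depth of a program -/
def depth (P : Program) : Ord1 :=
  if h : ∃ δ : Ord1, isDepth P δ then h.choose else O0

/-- the minimum model `M_P` -/
def MP (P : Program) : Interp := fun p =>
  if ordOf (Mα P (depth P) p) < ((depth P).1 : WithTop Ordinal)
  then Mα P (depth P) p else TV.Z

/-- the set of all infinite-valued models of `P` -/
def models (P : Program) : Set Interp := {I | isModel P I}

/-- `M ♯ α`: the part of `M` consisting of values of order `α` -/
def sharp (I : Interp) (α : Ord1) : Set (ℕ × TV) :=
  {pv | I pv.1 = pv.2 ∧ ordOf pv.2 = (α.1 : WithTop Ordinal)}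

/-- `⨀^α S = ⋀^α S ∪ ⋁^α S` -/
def odot (α : Ord1) (S : Set Interp) : Set (ℕ × TV) :=
  {pv | (∃ p : ℕ, pv = (p, TV.T α) ∧ ∀ M ∈ S, M p = TV.T α) ∨
        (∃ p : ℕ, pv = (p, TV.F α) ∧ ∃ M ∈ S, M p = TV.F α)}

/-- the sets `S_α` of the model intersection construction (junk for `α ≥ ω₁`) -/
def SA (P : Program) (o : Ordinal) : Set Interp :=
  Ordinal.limitRecOn o
    {M ∈ models P | sharp M O0 = odot O0 (models P)}
    (fun o' ih =>
      if h : o' + 1 < ω₁ then {M ∈ ih | sharp M ⟨o' + 1, h⟩ = odot ⟨o' + 1, h⟩ ih} else ih)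
    (fun o' _ ih =>
      if h : o' < ω₁ then
        {M : Interp | M ∈ (⋂ (b : Ordinal) (hb : b < o'), ih b hb) ∧
          sharp M ⟨o', h⟩ = odot ⟨o', h⟩ (⋂ (b : Ordinal) (hb : b < o'), ih b hb)}
      else ∅)

set_option linter.dupNamespace false


lemma TV.casesOn' (v : TV) : (∃ a, v = TV.F a) ∨ v = TV.Z ∨ ∃ a, v = TV.T a := by
  rcases ev : ofLex v with a | b
  · exact Or.inl ⟨a, ((toLex_ofLex v).symm.trans (congrArg toLex ev))⟩
  · rcases eb : ofLex b with u | a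
    · refine Or.inr (Or.inl ?_)
      have : b = toLex (Sum.inl ()) := (toLex_ofLex b).symm.trans (congrArg toLex eb)
      rw [← toLex_ofLex v, ev, this]; rfl
    · refine Or.inr (Or.inr ⟨OrderDual.ofDual a, ?_⟩)
      have : b = toLex (Sum.inr a) := (toLex_ofLex b).symm.trans (congrArg toLex eb)
      rw [← toLex_ofLex v, ev, this]; rfl

lemma O0_le (a : Ord1) : O0 ≤ a := Subtype.coe_le_coe.mp (zero_le (a := a.1))

lemma le_T0 (v : TV) : v ≤ TV.T O0 := by
  rcases TV.casesOn' v with ⟨a, rfl⟩ | rfl | ⟨a, rfl⟩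
  · simp [TV.F, TV.T]
  · simp [TV.Z, TV.T]
  · simp only [TV.T]
    rw [Sum.Lex.inr_le_inr_iff, Sum.Lex.inr_le_inr_iff]
    exact O0_le a

lemma F0_le (v : TV) : TV.F O0 ≤ v := by
  rcases TV.casesOn' v with ⟨a, rfl⟩ | rfl | ⟨a, rfl⟩
  · simp only [TV.F]; rw [Sum.Lex.inl_le_inl_iff]; exact O0_le a
  · simp [TV.F, TV.Z]
  · simp [TV.F, TV.T]

lemma lub_eq {S : Set TV} {v : TV} (h : IsLUB S v) : lub S = v := by
  rw [lub, dif_pos ⟨v, h⟩]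
  exact (Exists.choose_spec (⟨v, h⟩ : ∃ v, IsLUB S v)).unique h

lemma lub_single (v : TV) : lub {v} = v := lub_eq isLUB_singleton
lemma lub_empty : lub ∅ = TV.F O0 :=
  lub_eq ⟨fun v hv => hv.elim, fun v _ => F0_le v⟩
lemma lub_pair (a b : TV) : lub {a, b} = a ⊔ b := lub_eq isLUB_pair

/-- ordinals 1, 2 -/
def O1 : Ord1 := O0.succ
def O2 : Ord1 := O1.succ

lemma O1_ne_O0 : O1 ≠ O0 := by
  simp only [O1, O0, Ord1.succ, Subtype.mk.injEq, zero_add]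
  norm_num

lemma O2_ne_O1 : O2 ≠ O1 := by
  simp only [O2, O1, O0, Ord1.succ, Subtype.mk.injEq, zero_add]
  norm_num

lemma O2_ne_O0 : O2 ≠ O0 := by
  simp only [O2, O1, O0, Ord1.succ, Subtype.mk.injEq, zero_add]
  norm_num

lemma O0_lt_O1 : O0 < O1 := by
  simp only [O1, O0, Ord1.succ, Subtype.mk_lt_mk, zero_add]
  norm_num

/-- the witness program -/
def Pw : Program :=
  {⟨0, [.neg 1]⟩, ⟨2, [.pos 0]⟩, ⟨3, [.neg 2]⟩, ⟨3, [.pos 4]⟩, ⟨4, [.pos 3]⟩, ⟨1, [.ff]⟩}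

def Iw : Interp := fun n =>
  match n with
  | 0 => TV.T O1 | 1 => TV.F O0 | 2 => TV.F O0 | 3 => TV.T O1 | 4 => TV.F O0
  | _ => TV.F O0

def Jw : Interp := fun n =>
  match n with
  | 0 => TV.T O1 | 1 => TV.F O0 | 2 => TV.F O1 | 3 => TV.F O1 | 4 => TV.F O1
  | _ => TV.F O0

lemma negv_F (a : Ord1) : negv (TV.F a) = TV.T a.succ := rfl
lemma negv_T (a : Ord1) : negv (TV.T a) = TV.F a.succ := rfl

lemma body_single (I : Interp) (l : Lit) : evalBody I [l] = min (evalLit I l) (TV.T O0) := rfl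

lemma body_single' (I : Interp) (l : Lit) : evalBody I [l] = evalLit I l := by
  rw [body_single]; exact inf_eq_left.mpr (le_T0 _)

lemma TP_set (P : Program) (I : Interp) (p : ℕ) :
    TP P I p = lub {v | ∃ c ∈ P, c.head = p ∧ evalBody I c.body = v} := rfl

lemma F_lt_T (a b : Ord1) : TV.F a < TV.T b := by simp [TV.F, TV.T]
lemma T_inj {a b : Ord1} : TV.T a = TV.T b ↔ a = b := by simp [TV.T]
lemma F_inj {a b : Ord1} : TV.F a = TV.F b ↔ a = b := by simp [TV.F]
lemma F_ne_T (a b : Ord1) : TV.F a ≠ TV.T b := by simp [TV.F, TV.T]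

/-- the value of `T_P(I)` -/
def Iw' : Interp := fun n =>
  match n with
  | 0 => TV.T O1 | 1 => TV.F O0 | 2 => TV.T O1 | 3 => TV.T O1 | 4 => TV.T O1
  | _ => TV.F O0

/-- the value of `T_P(J)` -/
def Jw' : Interp := fun n =>
  match n with
  | 0 => TV.T O1 | 1 => TV.F O0 | 2 => TV.T O1 | 3 => TV.T O2 | 4 => TV.F O1
  | _ => TV.F O0

lemma mem_Pw (c : Clause) : c ∈ Pw ↔
    c = ⟨0, [.neg 1]⟩ ∨ c = ⟨2, [.pos 0]⟩ ∨ c = ⟨3, [.neg 2]⟩ ∨ c = ⟨3, [.pos 4]⟩ ∨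
    c = ⟨4, [.pos 3]⟩ ∨ c = ⟨1, [.ff]⟩ := by
  simp [Pw]

lemma TP_Iw : TP Pw Iw = Iw' := by
  funext n
  match n with
  | 0 =>
    rw [TP_set]
    have : {v | ∃ c ∈ Pw, c.head = 0 ∧ evalBody Iw c.body = v} = {evalBody Iw [.neg 1]} := by
      ext v
      simp only [mem_setOf_eq, mem_singleton_iff]
      constructor
      · rintro ⟨c, hc, hh, hv⟩
        rcases (mem_Pw c).1 hc with rfl | rfl | rfl | rfl | rfl | rfl <;> simp_all
      · rintro rfl; exact ⟨⟨0, [.neg 1]⟩, (mem_Pw _).2 (Or.inl rfl), rfl, rfl⟩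
    rw [this, lub_single, body_single']
    show negv (Iw 1) = _
    rw [show Iw 1 = TV.F O0 from rfl, negv_F]; rfl
  | 1 =>
    rw [TP_set]
    have : {v | ∃ c ∈ Pw, c.head = 1 ∧ evalBody Iw c.body = v} = {evalBody Iw [.ff]} := by
      ext v
      simp only [mem_setOf_eq, mem_singleton_iff]
      constructor
      · rintro ⟨c, hc, hh, hv⟩
        rcases (mem_Pw c).1 hc with rfl | rfl | rfl | rfl | rfl | rfl <;> simp_all
      · rintro rfl
        exact ⟨⟨1, [.ff]⟩, (mem_Pw _).2 (by tauto), rfl, rfl⟩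
    rw [this, lub_single, body_single']; rfl
  | 2 =>
    rw [TP_set]
    have : {v | ∃ c ∈ Pw, c.head = 2 ∧ evalBody Iw c.body = v} = {evalBody Iw [.pos 0]} := by
      ext v
      simp only [mem_setOf_eq, mem_singleton_iff]
      constructor
      · rintro ⟨c, hc, hh, hv⟩
        rcases (mem_Pw c).1 hc with rfl | rfl | rfl | rfl | rfl | rfl <;> simp_all
      · rintro rfl
        exact ⟨⟨2, [.pos 0]⟩, (mem_Pw _).2 (by tauto), rfl, rfl⟩
    rw [this, lub_single, body_single']; rfl
  | 3 =>
    rw [TP_set]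
    have : {v | ∃ c ∈ Pw, c.head = 3 ∧ evalBody Iw c.body = v} =
        {evalBody Iw [.neg 2], evalBody Iw [.pos 4]} := by
      ext v
      simp only [mem_setOf_eq, mem_insert_iff, mem_singleton_iff]
      constructor
      · rintro ⟨c, hc, hh, hv⟩
        rcases (mem_Pw c).1 hc with rfl | rfl | rfl | rfl | rfl | rfl <;> simp_all
      · rintro (rfl | rfl)
        · exact ⟨⟨3, [.neg 2]⟩, (mem_Pw _).2 (by tauto), rfl, rfl⟩
        · exact ⟨⟨3, [.pos 4]⟩, (mem_Pw _).2 (by tauto), rfl, rfl⟩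
    rw [this, lub_pair, body_single', body_single']
    show (negv (Iw 2)) ⊔ (Iw 4) = _
    rw [show Iw 2 = TV.F O0 from rfl, show Iw 4 = TV.F O0 from rfl, negv_F]
    show (TV.T O1) ⊔ (TV.F O0) = TV.T O1
    exact sup_eq_left.mpr (F_lt_T O0 O1).le
  | 4 =>
    rw [TP_set]
    have : {v | ∃ c ∈ Pw, c.head = 4 ∧ evalBody Iw c.body = v} = {evalBody Iw [.pos 3]} := by
      ext v
      simp only [mem_setOf_eq, mem_singleton_iff]
      constructor
      · rintro ⟨c, hc, hh, hv⟩
        rcases (mem_Pw c).1 hc with rfl | rfl | rfl | rfl | rfl | rfl <;> simp_all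
      · rintro rfl
        exact ⟨⟨4, [.pos 3]⟩, (mem_Pw _).2 (by tauto), rfl, rfl⟩
    rw [this, lub_single, body_single']; rfl
  | (m+5) =>
    rw [TP_set]
    have : {v | ∃ c ∈ Pw, c.head = m + 5 ∧ evalBody Iw c.body = v} = ∅ := by
      ext v
      simp only [mem_setOf_eq, mem_empty_iff_false, iff_false]
      rintro ⟨c, hc, hh, hv⟩
      rcases (mem_Pw c).1 hc with rfl | rfl | rfl | rfl | rfl | rfl <;> simp_all
    rw [this, lub_empty]; rfl

lemma TP_Jw : TP Pw Jw = Jw' := by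
  funext n
  match n with
  | 0 =>
    rw [TP_set]
    have : {v | ∃ c ∈ Pw, c.head = 0 ∧ evalBody Jw c.body = v} = {evalBody Jw [.neg 1]} := by
      ext v
      simp only [mem_setOf_eq, mem_singleton_iff]
      constructor
      · rintro ⟨c, hc, hh, hv⟩
        rcases (mem_Pw c).1 hc with rfl | rfl | rfl | rfl | rfl | rfl <;> simp_all
      · rintro rfl; exact ⟨⟨0, [.neg 1]⟩, (mem_Pw _).2 (Or.inl rfl), rfl, rfl⟩
    rw [this, lub_single, body_single']
    show negv (Jw 1) = _
    rw [show Jw 1 = TV.F O0 from rfl, negv_F]; rfl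
  | 1 =>
    rw [TP_set]
    have : {v | ∃ c ∈ Pw, c.head = 1 ∧ evalBody Jw c.body = v} = {evalBody Jw [.ff]} := by
      ext v
      simp only [mem_setOf_eq, mem_singleton_iff]
      constructor
      · rintro ⟨c, hc, hh, hv⟩
        rcases (mem_Pw c).1 hc with rfl | rfl | rfl | rfl | rfl | rfl <;> simp_all
      · rintro rfl
        exact ⟨⟨1, [.ff]⟩, (mem_Pw _).2 (by tauto), rfl, rfl⟩
    rw [this, lub_single, body_single']; rfl
  | 2 =>
    rw [TP_set]
    have : {v | ∃ c ∈ Pw, c.head = 2 ∧ evalBody Jw c.body = v} = {evalBody Jw [.pos 0]} := by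
      ext v
      simp only [mem_setOf_eq, mem_singleton_iff]
      constructor
      · rintro ⟨c, hc, hh, hv⟩
        rcases (mem_Pw c).1 hc with rfl | rfl | rfl | rfl | rfl | rfl <;> simp_all
      · rintro rfl
        exact ⟨⟨2, [.pos 0]⟩, (mem_Pw _).2 (by tauto), rfl, rfl⟩
    rw [this, lub_single, body_single']; rfl
  | 3 =>
    rw [TP_set]
    have : {v | ∃ c ∈ Pw, c.head = 3 ∧ evalBody Jw c.body = v} =
        {evalBody Jw [.neg 2], evalBody Jw [.pos 4]} := by
      ext v
      simp only [mem_setOf_eq, mem_insert_iff, mem_singleton_iff]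
      constructor
      · rintro ⟨c, hc, hh, hv⟩
        rcases (mem_Pw c).1 hc with rfl | rfl | rfl | rfl | rfl | rfl <;> simp_all
      · rintro (rfl | rfl)
        · exact ⟨⟨3, [.neg 2]⟩, (mem_Pw _).2 (by tauto), rfl, rfl⟩
        · exact ⟨⟨3, [.pos 4]⟩, (mem_Pw _).2 (by tauto), rfl, rfl⟩
    rw [this, lub_pair, body_single', body_single']
    show (negv (Jw 2)) ⊔ (Jw 4) = _
    rw [show Jw 2 = TV.F O1 from rfl, show Jw 4 = TV.F O1 from rfl, negv_F]
    show (TV.T O2) ⊔ (TV.F O1) = TV.T O2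
    exact sup_eq_left.mpr (F_lt_T O1 O2).le
  | 4 =>
    rw [TP_set]
    have : {v | ∃ c ∈ Pw, c.head = 4 ∧ evalBody Jw c.body = v} = {evalBody Jw [.pos 3]} := by
      ext v
      simp only [mem_setOf_eq, mem_singleton_iff]
      constructor
      · rintro ⟨c, hc, hh, hv⟩
        rcases (mem_Pw c).1 hc with rfl | rfl | rfl | rfl | rfl | rfl <;> simp_all
      · rintro rfl
        exact ⟨⟨4, [.pos 3]⟩, (mem_Pw _).2 (by tauto), rfl, rfl⟩
    rw [this, lub_single, body_single']; rfl
  | (m+5) =>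
    rw [TP_set]
    have : {v | ∃ c ∈ Pw, c.head = m + 5 ∧ evalBody Jw c.body = v} = ∅ := by
      ext v
      simp only [mem_setOf_eq, mem_empty_iff_false, iff_false]
      rintro ⟨c, hc, hh, hv⟩
      rcases (mem_Pw c).1 hc with rfl | rfl | rfl | rfl | rfl | rfl <;> simp_all
    rw [this, lub_empty]; rfl

/-- `I ⊑_∞ J` -/
lemma Iw_sqle_Jw : sqleInf Iw Jw := by
  refine Or.inr ⟨O0, ?_, Or.inr ⟨?_, ?_⟩⟩
  · intro β hβ
    exact absurd hβ (not_lt_of_ge (O0_le β))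
  · -- level Iw (T O0) ⊆ level Jw (T O0): both empty
    intro n hn
    exfalso
    simp only [level, mem_setOf_eq] at hn
    match n with
    | 0 => exact O1_ne_O0 (T_inj.1 hn)
    | 1 => exact F_ne_T _ _ hn
    | 2 => exact F_ne_T _ _ hn
    | 3 => exact O1_ne_O0 (T_inj.1 hn)
    | 4 => exact F_ne_T _ _ hn
    | (m+5) => exact F_ne_T _ _ hn
  · -- level Jw (F O0) ⊂ level Iw (F O0)
    constructor
    · intro n hn
      simp only [level, mem_setOf_eq] at hn ⊢
      match n with
      | 0 => exact absurd hn (by exact fun h => F_ne_T _ _ h.symm)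
      | 1 => rfl
      | 2 => exact absurd hn (fun h => O1_ne_O0 (F_inj.1 h))
      | 3 => exact absurd hn (fun h => O1_ne_O0 (F_inj.1 h))
      | 4 => exact absurd hn (fun h => O1_ne_O0 (F_inj.1 h))
      | (m+5) => rfl
    · intro hsub
      have h2 : (2:ℕ) ∈ level Iw (TV.F O0) := by
        simp only [level, mem_setOf_eq]; rfl
      have h2' := hsub h2
      simp only [level, mem_setOf_eq] at h2'
      have : TV.F O1 = TV.F O0 := h2'
      exact O1_ne_O0 (F_inj.1 this)

lemma not_sqle' : ¬ sqleInf Iw' Jw' := by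
  rintro (heq | ⟨α, hlt, hdisj⟩)
  · have h := congrFun heq 3
    have h' : TV.T O1 = TV.T O2 := h
    exact O2_ne_O1 (T_inj.1 h').symm
  · have h3I : Iw' 3 = TV.T O1 := rfl
    have h3J : Jw' 3 = TV.T O2 := rfl
    rcases lt_trichotomy α O1 with h | rfl | h
    · -- α < O1 means α = O0
      have hα : α = O0 := by
        have : α.1 < (1 : Ordinal) := by
          have h' := Subtype.coe_lt_coe.2 h
          show α.1 < (1 : Ordinal)
          rwa [show (O1.1 : Ordinal) = 1 from zero_add 1] at h'
        exact Subtype.ext (Ordinal.lt_one_iff_zero.1 this)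
      subst hα
      rcases hdisj with ⟨hT, _⟩ | ⟨_, hF⟩
      · -- level Iw' T0 ⊂ level Jw' T0, but both empty
        rcases hT with ⟨_, hne⟩
        apply hne
        intro n hn
        exfalso
        simp only [level, mem_setOf_eq] at hn
        match n with
        | 0 => exact O1_ne_O0 (T_inj.1 hn)
        | 1 => exact F_ne_T _ _ hn
        | 2 => exact O1_ne_O0 (T_inj.1 hn)
        | 3 => exact O2_ne_O0 (T_inj.1 hn)
        | 4 => exact F_ne_T _ _ hn
        | (m+5) => exact F_ne_T _ _ hn
      · -- level Jw' F0 ⊂ level Iw' F0; but they are equal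
        rcases hF with ⟨_, hne⟩
        apply hne
        intro n hn
        simp only [level, mem_setOf_eq] at hn ⊢
        match n with
        | 0 => exact absurd hn (fun h => F_ne_T _ _ h.symm)
        | 1 => rfl
        | 2 => exact absurd hn (fun h => F_ne_T _ _ h.symm)
        | 3 => exact absurd hn (fun h => F_ne_T _ _ h.symm)
        | 4 => exact absurd hn (fun h => F_ne_T _ _ h.symm)
        | (m+5) => rfl
    · -- α = O1: both disjuncts require level Iw' (T O1) ⊆ level Jw' (T O1)
      have hsub : level Iw' (TV.T O1) ⊆ level Jw' (TV.T O1) := by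
        rcases hdisj with ⟨hT, _⟩ | ⟨hT, _⟩
        · exact hT.1
        · exact hT
      have h3 : (3:ℕ) ∈ level Iw' (TV.T O1) := by simp only [level, mem_setOf_eq]; rfl
      have h3' := hsub h3
      simp only [level, mem_setOf_eq] at h3'
      have : TV.T O2 = TV.T O1 := h3'
      exact O2_ne_O1 (T_inj.1 this)
    · -- O1 < α: use eqA at O1
      have heq1 := (hlt O1 h) O1 le_rfl
      have h3 : (3:ℕ) ∈ level Iw' (TV.T O1) := by simp only [level, mem_setOf_eq]; rfl
      rw [heq1.1] at h3
      simp only [level, mem_setOf_eq] at h3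
      have : TV.T O2 = TV.T O1 := h3
      exact O2_ne_O1 (T_inj.1 this)

/-- `T_P` is not in general monotonic with respect to `⊑_∞`. -/
theorem TP_not_sqleInf_monotonic :
    ∃ (P : Program) (I J : Interp),
      P.Finite ∧ sqleInf I J ∧ ¬ sqleInf (TP P I) (TP P J) := by
  refine ⟨Pw, Iw, Jw, ?_, Iw_sqle_Jw, ?_⟩
  · apply Set.Finite.insert
    apply Set.Finite.insert
    apply Set.Finite.insert
    apply Set.Finite.insert
    apply Set.Finite.insert
    exact Set.finite_singleton _
  · rw [TP_Iw, TP_Jw]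
    exact not_sqle'


end IVS
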